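/- Define the subgroup K₃ = {M ∈ SL(2,ℤ) : f(M) ≡ 0 (mod 3)} and K₂ = {M ∈ SL(2,ℤ) : f(M) ≡ 0 (mod 2)}, where f([[a,b],[c,d]]) = (a+d)c - bd(c²-1) - 3c for c odd and (a+d)c - bd(c²-1) + 3d - 3 - 3cd for c even. With S = [[1,1],[0,1]], the six cosets Sⁿ(K₂ ∩ K₃), 0 ≤ n ≤ 5, are pairwise disjoint and their union is SL(2,ℤ); i.e., K₂ ∩ K₃ has index 6 in SL(2,ℤ). -/

import Mathlib

abbrev SL2Z := Matrix.SpecialLinearGroup (Fin 2) ℤ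

/-- Knopp's exponent for the eta multiplier system. -/
def f (M : SL2Z) : ℤ :=
  if Odd (M.1 1 0) then
    (M.1 0 0 + M.1 1 1) * M.1 1 0 - M.1 0 1 * M.1 1 1 * ((M.1 1 0) ^ 2 - 1) - 3 * M.1 1 0
  else
    (M.1 0 0 + M.1 1 1) * M.1 1 0 - M.1 0 1 * M.1 1 1 * ((M.1 1 0) ^ 2 - 1)
      + 3 * M.1 1 1 - 3 - 3 * M.1 1 0 * M.1 1 1

/-- Entrywise congruence of `M` to `[[p,q],[r,s]]` mod `n`. -/
def MCong (n : ℤ) (M : SL2Z) (p q r s : ℤ) : Prop :=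
  M.1 0 0 ≡ p [ZMOD n] ∧ M.1 0 1 ≡ q [ZMOD n] ∧ M.1 1 0 ≡ r [ZMOD n] ∧ M.1 1 1 ≡ s [ZMOD n]

def S : SL2Z := ⟨!![1, 1; 0, 1], by norm_num [Matrix.det_fin_two_of]⟩

lemma fS (M : SL2Z) : f (S * M) = f M + ((M.1 1 0)^2 - (M.1 1 1)^2 * ((M.1 1 0)^2 - 1)) := by
  have h00 : (S * M).1 0 0 = M.1 0 0 + M.1 1 0 := by
    rw [Matrix.SpecialLinearGroup.coe_mul]
    simp [S, Matrix.SpecialLinearGroup.coe_mul, Matrix.mul_apply, Fin.sum_univ_two]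
  have h01 : (S * M).1 0 1 = M.1 0 1 + M.1 1 1 := by
    rw [Matrix.SpecialLinearGroup.coe_mul]
    simp [S, Matrix.SpecialLinearGroup.coe_mul, Matrix.mul_apply, Fin.sum_univ_two]
  have h10 : (S * M).1 1 0 = M.1 1 0 := by
    rw [Matrix.SpecialLinearGroup.coe_mul]
    simp [S, Matrix.SpecialLinearGroup.coe_mul, Matrix.mul_apply, Fin.sum_univ_two]
  have h11 : (S * M).1 1 1 = M.1 1 1 := by
    rw [Matrix.SpecialLinearGroup.coe_mul]
    simp [S, Matrix.SpecialLinearGroup.coe_mul, Matrix.mul_apply, Fin.sum_univ_two]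
  unfold f
  rw [h00, h01, h10, h11]
  by_cases h : Odd (M.1 1 0) <;> simp [h] <;> ring

lemma z2 : ∀ a b c d : ZMod 2, a * d - b * c = 1 → c ^ 2 - d ^ 2 * (c ^ 2 - 1) = 1 := by decide

lemma z3 : ∀ a b c d : ZMod 3, a * d - b * c = 1 → c ^ 2 - d ^ 2 * (c ^ 2 - 1) = 1 := by decide

lemma det_rel (M : SL2Z) : M.1 0 0 * M.1 1 1 - M.1 0 1 * M.1 1 0 = 1 := by
  have := M.2
  rwa [Matrix.det_fin_two] at this

lemma fS_mod (M : SL2Z) (n : ℕ) (hn : n = 2 ∨ n = 3) :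
    f (S * M) ≡ f M + 1 [ZMOD n] := by
  rw [fS]
  have hd := det_rel M
  have key : ((M.1 1 0)^2 - (M.1 1 1)^2 * ((M.1 1 0)^2 - 1)) ≡ 1 [ZMOD n] := by
    have : (((M.1 1 0)^2 - (M.1 1 1)^2 * ((M.1 1 0)^2 - 1) : ℤ) : ZMod n) = ((1 : ℤ) : ZMod n) := by
      push_cast
      rcases hn with h | h <;> subst h
      · have hd' := congrArg (Int.cast : ℤ → ZMod 2) hd
        push_cast at hd'
        exact z2 _ _ _ _ hd'
      · have hd' := congrArg (Int.cast : ℤ → ZMod 3) hd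
        push_cast at hd'
        exact z3 _ _ _ _ hd'
    exact (ZMod.intCast_eq_intCast_iff _ _ _).mp this
  exact Int.ModEq.add_left _ key

lemma fSpow (M : SL2Z) (k : ℕ) (n : ℕ) (hn : n = 2 ∨ n = 3) :
    f (S ^ k * M) ≡ f M + k [ZMOD n] := by
  induction k with
  | zero => simp
  | succ k ih =>
    have hrw : S ^ (k + 1) * M = S * (S ^ k * M) := by
      rw [pow_succ']; group
    rw [hrw]
    calc f (S * (S ^ k * M)) ≡ f (S ^ k * M) + 1 [ZMOD n] := fS_mod _ n hn
      _ ≡ (f M + k) + 1 [ZMOD n] := ih.add_right 1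
      _ = f M + (k + 1 : ℕ) := by push_cast; ring

theorem stmt19 :
    (∀ M : SL2Z, ∃ n : ℕ, n ≤ 5 ∧
      ∃ N : SL2Z, (f N ≡ 0 [ZMOD 2] ∧ f N ≡ 0 [ZMOD 3]) ∧ M = S ^ n * N) ∧
    (∀ m n : ℕ, m ≤ 5 → n ≤ 5 →
      ∀ N N' : SL2Z, (f N ≡ 0 [ZMOD 2] ∧ f N ≡ 0 [ZMOD 3]) →
        (f N' ≡ 0 [ZMOD 2] ∧ f N' ≡ 0 [ZMOD 3]) →
        S ^ m * N = S ^ n * N' → m = n) := by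
  constructor
  · intro M
    set n : ℕ := (f M % 6).toNat with hn
    have hncast : (n : ℤ) = f M % 6 :=
      Int.toNat_of_nonneg (Int.emod_nonneg _ (by norm_num))
    have hlt : f M % 6 < 6 := Int.emod_lt_of_pos _ (by norm_num)
    refine ⟨n, by omega, (S ^ n)⁻¹ * M, ?_, by group⟩
    set N := (S ^ n)⁻¹ * M with hN
    have hM : S ^ n * N = M := by rw [hN]; group
    have hmod : ∀ p : ℕ, p = 2 ∨ p = 3 → f N ≡ 0 [ZMOD p] := by
      intro p hp
      have h1 : f (S ^ n * N) ≡ f N + n [ZMOD p] := fSpow N n p hp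
      rw [hM] at h1
      unfold Int.ModEq at h1 ⊢
      rcases hp with h | h <;> subst h <;> omega
    exact ⟨hmod 2 (Or.inl rfl), hmod 3 (Or.inr rfl)⟩
  · intro m n hm hn N N' hN hN' heq
    have h2 : ∀ p : ℕ, p = 2 ∨ p = 3 → (m : ℤ) % p = (n : ℤ) % p := by
      intro p hp
      have e1 : f (S ^ m * N) ≡ f N + m [ZMOD p] := fSpow N m p hp
      have e2 : f (S ^ n * N') ≡ f N' + n [ZMOD p] := fSpow N' n p hp
      rw [heq] at e1
      have hNp : f N ≡ 0 [ZMOD p] := by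
        rcases hp with h | h <;> subst h
        · exact hN.1
        · exact hN.2
      have hN'p : f N' ≡ 0 [ZMOD p] := by
        rcases hp with h | h <;> subst h
        · exact hN'.1
        · exact hN'.2
      unfold Int.ModEq at e1 e2 hNp hN'p
      rcases hp with h | h <;> subst h <;> omega
    have g2 := h2 2 (Or.inl rfl)
    have g3 := h2 3 (Or.inr rfl)
    omega
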